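/- arXiv:1103.0995 — 2 statements merged into one kernel-verified Lean document; each statement's English description precedes it below -/
import Mathlib

section
/- Let A ∈ R^{m×n} have rank ρ, let k < ρ, and let V_k ∈ R^{n×k} be the matrix whose columns are the top k right singular vectors of A. Let S ∈ R^{n×r} be any matrix such that rank(V_kᵀ S) = k, and set C = A S. Then for ξ ∈ {2, F}: ‖A − Π^ξ_{C,k}(A)‖_ξ² ≤ ‖A − A_k‖_ξ² + ‖(A − A_k) S (V_kᵀ S)⁺‖_ξ². -/
open Matrix MeasureTheory

noncomputable def frobSq {m n : Type*} [Fintype m] [Fintype n] (A : Matrix m n ℝ) : ℝ :=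
  ∑ i, ∑ j, A i j ^ 2

noncomputable def spec {m n : Type*} [Fintype m] [Fintype n] [DecidableEq n]
    (A : Matrix m n ℝ) : ℝ :=
  ‖LinearMap.toContinuousLinearMap (Matrix.toEuclideanLin A)‖

noncomputable def specErr {m n : Type*} [Fintype m] [Fintype n] [DecidableEq n]
    (A : Matrix m n ℝ) (k : ℕ) : ℝ :=
  sInf {e : ℝ | ∃ X : Matrix m n ℝ, X.rank ≤ k ∧ e = spec (A - X)}

noncomputable def frobSqErr {m n : Type*} [Fintype m] [Fintype n]
    (A : Matrix m n ℝ) (k : ℕ) : ℝ :=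
  sInf {e : ℝ | ∃ X : Matrix m n ℝ, X.rank ≤ k ∧ e = frobSq (A - X)}

noncomputable def specErrIn {m n r : Type*} [Fintype m] [Fintype n] [DecidableEq n]
    [Fintype r] (A : Matrix m n ℝ) (C : Matrix m r ℝ) (k : ℕ) : ℝ :=
  sInf {e : ℝ | ∃ X : Matrix m n ℝ, X.rank ≤ k ∧
    LinearMap.range X.mulVecLin ≤ LinearMap.range C.mulVecLin ∧ e = spec (A - X)}

noncomputable def frobSqErrIn {m n r : Type*} [Fintype m] [Fintype n] [Fintype r]
    (A : Matrix m n ℝ) (C : Matrix m r ℝ) (k : ℕ) : ℝ :=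
  sInf {e : ℝ | ∃ X : Matrix m n ℝ, X.rank ≤ k ∧
    LinearMap.range X.mulVecLin ≤ LinearMap.range C.mulVecLin ∧ e = frobSq (A - X)}

def IsMoorePenrose {m n : Type*} [Fintype m] [Fintype n]
    (M : Matrix m n ℝ) (P : Matrix n m ℝ) : Prop :=
  M * P * M = M ∧ P * M * P = P ∧ (M * P)ᵀ = M * P ∧ (P * M)ᵀ = P * M


section AuxBDM

open Matrix

lemma BDM.dot_mulVec_mulVec {m n p : ℕ} (M : Matrix (Fin m) (Fin n) ℝ)
    (N : Matrix (Fin m) (Fin p) ℝ) (x : Fin n → ℝ) (y : Fin p → ℝ) :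
    (M *ᵥ x) ⬝ᵥ (N *ᵥ y) = x ⬝ᵥ ((Mᵀ * N) *ᵥ y) := by
  rw [← mulVec_mulVec, dotProduct_mulVec x, vecMul_transpose, dotProduct_comm, dotProduct_mulVec,
    dotProduct_comm]

lemma BDM.inner_symm_dot {n : ℕ} (a b : Fin n → ℝ) :
    (inner ℝ ((WithLp.equiv 2 (Fin n → ℝ)).symm a) ((WithLp.equiv 2 (Fin n → ℝ)).symm b) : ℝ)
      = a ⬝ᵥ b := by
  simp [PiLp.inner_apply, dotProduct, mul_comm]

lemma BDM.norm_symm_sq {n : ℕ} (a : Fin n → ℝ) :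
    ‖(WithLp.equiv 2 (Fin n → ℝ)).symm a‖ ^ 2 = a ⬝ᵥ a := by
  rw [← real_inner_self_eq_norm_sq, BDM.inner_symm_dot]

lemma BDM.spec_le_mul {m n : ℕ} (M : Matrix (Fin m) (Fin n) ℝ) (x : EuclideanSpace ℝ (Fin n)) :
    ‖toEuclideanLin M x‖ ≤ spec M * ‖x‖ := by
  simpa [spec] using (LinearMap.toContinuousLinearMap (Matrix.toEuclideanLin M)).le_opNorm x

lemma BDM.spec_nonneg {m n : ℕ} (M : Matrix (Fin m) (Fin n) ℝ) : 0 ≤ spec M := norm_nonneg _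

lemma BDM.spec_le_bound {m n : ℕ} (M : Matrix (Fin m) (Fin n) ℝ) (c : ℝ) (hc : 0 ≤ c)
    (h : ∀ x : EuclideanSpace ℝ (Fin n), ‖toEuclideanLin M x‖ ≤ c * ‖x‖) : spec M ≤ c := by
  apply ContinuousLinearMap.opNorm_le_bound _ hc
  intro x
  simpa using h x

lemma BDM.cauchy4 {a b c d p q : ℝ} (_ : 0 ≤ a) (_ : 0 ≤ b) (_ : 0 ≤ c) (_ : 0 ≤ d)
    (hp : 0 ≤ p) (hq : 0 ≤ q) (hpp : p ^ 2 = a ^ 2 + c ^ 2) (hqq : q ^ 2 = b ^ 2 + d ^ 2) :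
    a * b + c * d ≤ p * q := by
  have h2 : (a * b + c * d) ^ 2 ≤ (p * q) ^ 2 := by
    rw [mul_pow, hpp, hqq]; nlinarith [sq_nonneg (a * d - c * b)]
  exact le_of_pow_le_pow_left₀ two_ne_zero (by positivity) h2

lemma BDM.spec_split {m n k : ℕ} (E : Matrix (Fin m) (Fin n) ℝ) (F : Matrix (Fin m) (Fin k) ℝ)
    (V : Matrix (Fin n) (Fin k) ℝ) (hV : Vᵀ * V = 1) (hEV : E * V = 0) :
    spec (E - F * Vᵀ) ^ 2 ≤ spec E ^ 2 + spec F ^ 2 := by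
  set s := Real.sqrt (spec E ^ 2 + spec F ^ 2) with hs
  have hsnn : 0 ≤ s := Real.sqrt_nonneg _
  have hss : s ^ 2 = spec E ^ 2 + spec F ^ 2 := Real.sq_sqrt (by positivity)
  have hmain : spec (E - F * Vᵀ) ≤ s := by
    apply BDM.spec_le_bound _ _ hsnn
    intro x
    set xv : Fin n → ℝ := WithLp.equiv 2 (Fin n → ℝ) x with hxv
    set uv : Fin n → ℝ := (1 - V * Vᵀ) *ᵥ xv with huv
    set wv : Fin k → ℝ := Vᵀ *ᵥ xv with hwv
    set zv : Fin n → ℝ := (V * Vᵀ) *ᵥ xv with hzv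
    have hvec : (E - F * Vᵀ) *ᵥ xv = E *ᵥ uv - F *ᵥ wv := by
      have h1 : E * (1 - V * Vᵀ) = E := by
        rw [Matrix.mul_sub, Matrix.mul_one, ← Matrix.mul_assoc, hEV, Matrix.zero_mul, sub_zero]
      rw [huv, hwv, mulVec_mulVec, h1, mulVec_mulVec, sub_mulVec]
    have hperp : uv ⬝ᵥ zv = 0 := by
      rw [huv, hzv, BDM.dot_mulVec_mulVec]
      have : (1 - V * Vᵀ)ᵀ * (V * Vᵀ) = 0 := by
        rw [transpose_sub, transpose_one, transpose_mul, transpose_transpose, Matrix.sub_mul,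
          Matrix.one_mul, Matrix.mul_assoc V Vᵀ (V * Vᵀ), ← Matrix.mul_assoc Vᵀ V Vᵀ, hV,
          Matrix.one_mul, sub_self]
      rw [this, zero_mulVec, dotProduct_zero]
    have hz : zv ⬝ᵥ zv = wv ⬝ᵥ wv := by
      have : zv = V *ᵥ wv := by rw [hzv, hwv, mulVec_mulVec]
      rw [this, BDM.dot_mulVec_mulVec, hV, one_mulVec]
    have hxsum : uv ⬝ᵥ uv + wv ⬝ᵥ wv = xv ⬝ᵥ xv := by
      have hx : xv = uv + zv := by
        rw [huv, hzv, ← add_mulVec, sub_add_cancel, one_mulVec]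
      rw [hx, add_dotProduct, dotProduct_add, dotProduct_add, hperp, dotProduct_comm zv uv, hperp,
        hz]
      ring
    have hxnorm : ‖x‖ ^ 2 = xv ⬝ᵥ xv := by
      rw [← BDM.norm_symm_sq]
      congr 1
    have hnormsum : ‖(WithLp.equiv 2 (Fin n → ℝ)).symm uv‖ ^ 2
        + ‖(WithLp.equiv 2 (Fin k → ℝ)).symm wv‖ ^ 2 = ‖x‖ ^ 2 := by
      rw [BDM.norm_symm_sq, BDM.norm_symm_sq, hxsum, hxnorm]
    have happ : toEuclideanLin (E - F * Vᵀ) x =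
        toEuclideanLin E ((WithLp.equiv 2 (Fin n → ℝ)).symm uv)
          - toEuclideanLin F ((WithLp.equiv 2 (Fin k → ℝ)).symm wv) := by
      show WithLp.toLp 2 ((E - F * Vᵀ) *ᵥ xv) = WithLp.toLp 2 (E *ᵥ uv) - WithLp.toLp 2 (F *ᵥ wv)
      rw [hvec]
      rfl
    calc ‖toEuclideanLin (E - F * Vᵀ) x‖
        ≤ ‖toEuclideanLin E ((WithLp.equiv 2 (Fin n → ℝ)).symm uv)‖
          + ‖toEuclideanLin F ((WithLp.equiv 2 (Fin k → ℝ)).symm wv)‖ := by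
          rw [happ]; exact norm_sub_le _ _
      _ ≤ spec E * ‖(WithLp.equiv 2 (Fin n → ℝ)).symm uv‖
          + spec F * ‖(WithLp.equiv 2 (Fin k → ℝ)).symm wv‖ :=
          add_le_add (BDM.spec_le_mul _ _) (BDM.spec_le_mul _ _)
      _ ≤ s * ‖x‖ :=
          BDM.cauchy4 (BDM.spec_nonneg E) (norm_nonneg _) (BDM.spec_nonneg F) (norm_nonneg _)
            hsnn (norm_nonneg _) hss hnormsum.symm
  calc spec (E - F * Vᵀ) ^ 2 ≤ s ^ 2 := pow_le_pow_left₀ (BDM.spec_nonneg _) hmain 2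
    _ = _ := hss

lemma BDM.frobSq_eq_trace {m n : ℕ} (M : Matrix (Fin m) (Fin n) ℝ) :
    frobSq M = (Mᵀ * M).trace := by
  simp only [frobSq, trace, Matrix.mul_apply, diag_apply, transpose_apply, sq]
  exact Finset.sum_comm

lemma BDM.frobSq_nonneg {m n : Type*} [Fintype m] [Fintype n] (M : Matrix m n ℝ) :
    0 ≤ frobSq M := by
  apply Finset.sum_nonneg; intro i _; apply Finset.sum_nonneg; intro j _; positivity

lemma BDM.frob_split {m n k : ℕ} (E : Matrix (Fin m) (Fin n) ℝ) (F : Matrix (Fin m) (Fin k) ℝ)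
    (V : Matrix (Fin n) (Fin k) ℝ) (hV : Vᵀ * V = 1) (hEV : E * V = 0) :
    frobSq (E - F * Vᵀ) = frobSq E + frobSq F := by
  have expand : (E - F * Vᵀ)ᵀ * (E - F * Vᵀ)
      = Eᵀ * E - Eᵀ * (F * Vᵀ) - V * Fᵀ * E + V * Fᵀ * (F * Vᵀ) := by
    rw [transpose_sub, transpose_mul, transpose_transpose, Matrix.sub_mul, Matrix.mul_sub,
      Matrix.mul_sub]
    abel
  have t2 : (Eᵀ * (F * Vᵀ)).trace = 0 := by
    rw [← Matrix.mul_assoc, trace_mul_cycle, ← transpose_mul, hEV, transpose_zero,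
      Matrix.zero_mul, trace_zero]
  have t3 : (V * Fᵀ * E).trace = 0 := by
    rw [trace_mul_cycle, hEV, Matrix.zero_mul, trace_zero]
  have t4 : (V * Fᵀ * (F * Vᵀ)).trace = (Fᵀ * F).trace := by
    rw [trace_mul_comm, Matrix.mul_assoc F Vᵀ (V * Fᵀ), ← Matrix.mul_assoc Vᵀ V Fᵀ, hV,
      Matrix.one_mul, trace_mul_comm]
  rw [BDM.frobSq_eq_trace, BDM.frobSq_eq_trace, BDM.frobSq_eq_trace, expand, trace_add, trace_sub,
    trace_sub, t2, t3, t4]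
  ring

end AuxBDM

/-- **Column reconstruction via the top `k` right singular vectors** (Lemma 3.2 of
Boutsidis–Drineas–Magdon-Ismail): let `V` be the `n × k` matrix of the top `k` right
singular vectors of `A` (so `VᵀV = I_k` and `A_k = A V Vᵀ` is a best rank-`k`
approximation of `A` in both norms).  If `S` satisfies `rank(VᵀS) = k` then, with
`C = A S`, for both `ξ = 2` and `ξ = F`,
`‖A - Π^ξ_{C,k}(A)‖_ξ² ≤ ‖A - A_k‖_ξ² + ‖(A - A_k) S (VᵀS)⁺‖_ξ²`. -/
theorem svd_column_reconstruction
    {m n k r : ℕ} (A : Matrix (Fin m) (Fin n) ℝ) (hk : k < A.rank)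
    (V : Matrix (Fin n) (Fin k) ℝ) (hV : Vᵀ * V = 1)
    (hbest2 : ∀ X : Matrix (Fin m) (Fin n) ℝ, X.rank ≤ k →
      spec (A - A * V * Vᵀ) ≤ spec (A - X))
    (hbestF : ∀ X : Matrix (Fin m) (Fin n) ℝ, X.rank ≤ k →
      frobSq (A - A * V * Vᵀ) ≤ frobSq (A - X))
    (S : Matrix (Fin n) (Fin r) ℝ) (hrank : (Vᵀ * S).rank = k)
    (P : Matrix (Fin r) (Fin k) ℝ) (hP : IsMoorePenrose (Vᵀ * S) P) :
    specErrIn A (A * S) k ^ 2 ≤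
        spec (A - A * V * Vᵀ) ^ 2 + spec ((A - A * V * Vᵀ) * S * P) ^ 2 ∧
    frobSqErrIn A (A * S) k ≤
        frobSq (A - A * V * Vᵀ) + frobSq ((A - A * V * Vᵀ) * S * P) := by
  -- the pseudoinverse is a right inverse of `Vᵀ * S`
  obtain ⟨hP1, -, -, -⟩ := hP
  have hMP1 : Vᵀ * S * P = 1 := by
    have hNN : (Vᵀ * S * P) * (Vᵀ * S * P) = Vᵀ * S * P := by
      rw [← Matrix.mul_assoc (Vᵀ * S * P) (Vᵀ * S) P, hP1]
    set N : Matrix (Fin k) (Fin k) ℝ := Vᵀ * S * P with hN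
    have hrkN : N.rank = k := by
      refine le_antisymm (by simpa using N.rank_le_card_height) ?_
      calc k = (Vᵀ * S).rank := hrank.symm
        _ = (Vᵀ * S * P * (Vᵀ * S)).rank := by rw [hP1]
        _ ≤ N.rank := Matrix.rank_mul_le_left _ _
    have htop : LinearMap.range N.mulVecLin = ⊤ := by
      apply Submodule.eq_top_of_finrank_eq
      rw [show Module.finrank ℝ ↥(LinearMap.range N.mulVecLin) = N.rank from rfl, hrkN,
        Module.finrank_fin_fun]
    have hv : ∀ v, N *ᵥ v = v := by
      intro v
      obtain ⟨w, hw⟩ := (LinearMap.range_eq_top.mp htop) v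
      have hw' : N *ᵥ w = v := hw
      calc N *ᵥ v = N *ᵥ (N *ᵥ w) := by rw [hw']
        _ = (N * N) *ᵥ w := (mulVec_mulVec ..)
        _ = v := by rw [hNN, hw']
    have : N = 1 := by
      ext i j
      have := congrFun (hv (Pi.single j 1)) i
      simpa [Matrix.mulVec_single, Matrix.one_apply, Pi.single_apply, eq_comm] using this
    exact this
  -- notation
  set E : Matrix (Fin m) (Fin n) ℝ := A - A * V * Vᵀ with hE
  set F : Matrix (Fin m) (Fin k) ℝ := E * S * P with hF
  set X : Matrix (Fin m) (Fin n) ℝ := A * S * (P * Vᵀ) with hXdef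
  have hEV : E * V = 0 := by
    rw [hE, Matrix.sub_mul, Matrix.mul_assoc (A * V) Vᵀ V, hV, Matrix.mul_one, sub_self]
  have hkey : E * S * P = A * S * P - A * V := by
    rw [hE, Matrix.sub_mul, Matrix.sub_mul]
    congr 1
    rw [Matrix.mul_assoc (A * V) Vᵀ S, Matrix.mul_assoc (A * V) (Vᵀ * S) P, hMP1,
      Matrix.mul_one]
  have hAX : A - X = E - F * Vᵀ := by
    rw [hXdef, hF, hkey, hE, Matrix.sub_mul, ← Matrix.mul_assoc (A * S) P Vᵀ]
    abel
  -- the candidate is feasible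
  have hrankX : X.rank ≤ k := by
    have h1 : X = (A * S * P) * Vᵀ := by rw [hXdef, ← Matrix.mul_assoc (A * S) P Vᵀ]
    calc X.rank ≤ Vᵀ.rank := by rw [h1]; exact Matrix.rank_mul_le_right _ _
      _ ≤ k := by simpa using Vᵀ.rank_le_card_height
  have hrangeX : LinearMap.range X.mulVecLin ≤ LinearMap.range (A * S).mulVecLin := by
    rw [hXdef, Matrix.mulVecLin_mul]
    exact LinearMap.range_comp_le_range _ _
  -- sInf manipulations, spectral part
  have hspec_mem : spec (A - X) ∈ {e : ℝ | ∃ Y : Matrix (Fin m) (Fin n) ℝ, Y.rank ≤ k ∧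
      LinearMap.range Y.mulVecLin ≤ LinearMap.range (A * S).mulVecLin ∧ e = spec (A - Y)} :=
    ⟨X, hrankX, hrangeX, rfl⟩
  have hspec_bdd : BddBelow {e : ℝ | ∃ Y : Matrix (Fin m) (Fin n) ℝ, Y.rank ≤ k ∧
      LinearMap.range Y.mulVecLin ≤ LinearMap.range (A * S).mulVecLin ∧ e = spec (A - Y)} := by
    refine ⟨0, fun e he => ?_⟩
    obtain ⟨Y, -, -, hY⟩ := he
    rw [hY]; exact BDM.spec_nonneg _
  have hspec_le : specErrIn A (A * S) k ≤ spec (A - X) := csInf_le hspec_bdd hspec_mem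
  have hspec_nonneg : 0 ≤ specErrIn A (A * S) k := by
    apply le_csInf ⟨_, hspec_mem⟩
    rintro b ⟨Y, -, -, hY⟩
    rw [hY]; exact BDM.spec_nonneg _
  have hfrob_mem : frobSq (A - X) ∈ {e : ℝ | ∃ Y : Matrix (Fin m) (Fin n) ℝ, Y.rank ≤ k ∧
      LinearMap.range Y.mulVecLin ≤ LinearMap.range (A * S).mulVecLin ∧ e = frobSq (A - Y)} :=
    ⟨X, hrankX, hrangeX, rfl⟩
  have hfrob_bdd : BddBelow {e : ℝ | ∃ Y : Matrix (Fin m) (Fin n) ℝ, Y.rank ≤ k ∧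
      LinearMap.range Y.mulVecLin ≤ LinearMap.range (A * S).mulVecLin ∧ e = frobSq (A - Y)} := by
    refine ⟨0, fun e he => ?_⟩
    obtain ⟨Y, -, -, hY⟩ := he
    rw [hY]; exact BDM.frobSq_nonneg _
  have hfrob_le : frobSqErrIn A (A * S) k ≤ frobSq (A - X) := csInf_le hfrob_bdd hfrob_mem
  constructor
  · calc specErrIn A (A * S) k ^ 2 ≤ spec (A - X) ^ 2 :=
        pow_le_pow_left₀ hspec_nonneg hspec_le 2
      _ = spec (E - F * Vᵀ) ^ 2 := by rw [hAX]
      _ ≤ spec E ^ 2 + spec F ^ 2 := BDM.spec_split E F V hV hEV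
      _ = spec (A - A * V * Vᵀ) ^ 2 + spec ((A - A * V * Vᵀ) * S * P) ^ 2 := by rw [hE, hF]
  · calc frobSqErrIn A (A * S) k ≤ frobSq (A - X) := hfrob_le
      _ = frobSq (E - F * Vᵀ) := by rw [hAX]
      _ = frobSq E + frobSq F := BDM.frob_split E F V hV hEV
      _ = frobSq (A - A * V * Vᵀ) + frobSq ((A - A * V * Vᵀ) * S * P) := by rw [hE, hF]
end

section
/- Let A ∈ R^{m×n}, C ∈ R^{m×r}, and let k < r be an integer. Fix ξ ∈ {2, F} and let X^ξ ∈ R^{r×n} be a matrix of rank at most k minimizing ‖A − C Ψ‖_ξ over all Ψ ∈ R^{r×n} of rank at most k. Then for every Y ∈ R^{r×n} of rank at most k: ‖A − C X^ξ‖_ξ² = ‖A − (C X^ξ)(C X^ξ)⁺ A‖_ξ² ≤ ‖A − (C Y)(C Y)⁺ A‖_ξ². -/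
open Matrix MeasureTheory

section AuxProjLemmas

lemma aux_frobSq_nonneg {m n : Type*} [Fintype m] [Fintype n] (A : Matrix m n ℝ) :
    0 ≤ frobSq A := by
  apply Finset.sum_nonneg; intro i _; apply Finset.sum_nonneg; intro j _; positivity

lemma aux_spec_nonneg {m n : Type*} [Fintype m] [Fintype n] [DecidableEq n]
    (A : Matrix m n ℝ) : 0 ≤ spec A := norm_nonneg _

lemma aux_frobSq_eq_trace {m n : Type*} [Fintype m] [Fintype n] (A : Matrix m n ℝ) :
    frobSq A = Matrix.trace (Aᵀ * A) := by
  simp only [frobSq, Matrix.trace, Matrix.diag, Matrix.mul_apply, Matrix.transpose_apply, sq]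
  rw [Finset.sum_comm]

lemma aux_dp_zero {m : Type*} [Fintype m] [DecidableEq m] (Q : Matrix m m ℝ) (hsym : Qᵀ = Q)
    (hidem : Q * Q = Q) (x : m → ℝ) :
    (Q *ᵥ x) ⬝ᵥ ((1 - Q) *ᵥ x) = 0 := by
  rw [Matrix.dotProduct_mulVec]
  have h1 : Q *ᵥ x = x ᵥ* Q := by rw [← Matrix.mulVec_transpose, hsym]
  rw [h1, Matrix.vecMul_vecMul]
  have : Q * (1 - Q) = 0 := by rw [Matrix.mul_sub, Matrix.mul_one, hidem, sub_self]
  rw [this, Matrix.vecMul_zero, zero_dotProduct]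

lemma aux_proj_vec_contract {m : Type*} [Fintype m] [DecidableEq m]
    (Q : Matrix m m ℝ) (hsym : Qᵀ = Q) (hidem : Q * Q = Q)
    (v : EuclideanSpace ℝ m) : ‖Matrix.toEuclideanLin Q v‖ ≤ ‖v‖ := by
  set w : EuclideanSpace ℝ m := Matrix.toEuclideanLin Q v with hw
  have hfun : ∀ i, w i = (Q *ᵥ (WithLp.equiv 2 (m → ℝ) v)) i := by
    intro i; rw [hw, Matrix.toEuclideanLin_apply]; rfl
  have hfun2 : ∀ i, (v - w) i = ((1 - Q) *ᵥ (WithLp.equiv 2 (m → ℝ) v)) i := by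
    intro i
    rw [Matrix.sub_mulVec, Matrix.one_mulVec]
    simp only [PiLp.sub_apply, hfun i]
    rfl
  have hinner : inner ℝ w (v - w) = (0 : ℝ) := by
    calc inner ℝ w (v - w) = ∑ i, w i * (v - w) i := by
          rw [PiLp.inner_apply]; simp [RCLike.inner_apply, mul_comm]
      _ = (Q *ᵥ (WithLp.equiv 2 (m → ℝ) v)) ⬝ᵥ ((1 - Q) *ᵥ (WithLp.equiv 2 (m → ℝ) v)) := by
          unfold dotProduct
          exact Finset.sum_congr rfl fun i _ => by rw [hfun i, hfun2 i]
      _ = 0 := aux_dp_zero Q hsym hidem _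
  have hkey : ‖v‖ ^ 2 = ‖w‖ ^ 2 + ‖v - w‖ ^ 2 := by
    have h := norm_add_sq_real w (v - w)
    rw [add_sub_cancel, hinner] at h
    linarith
  nlinarith [norm_nonneg w, norm_nonneg v, sq_nonneg ‖v - w‖]

lemma aux_spec_proj_contract {m n : Type*} [Fintype m] [Fintype n] [DecidableEq n]
    [DecidableEq m]
    (Q : Matrix m m ℝ) (hsym : Qᵀ = Q) (hidem : Q * Q = Q) (B : Matrix m n ℝ) :
    spec (Q * B) ≤ spec B := by
  unfold spec
  apply ContinuousLinearMap.opNorm_le_bound _ (norm_nonneg _)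
  intro v
  have hcomp : Matrix.toEuclideanLin (Q * B) v
      = Matrix.toEuclideanLin Q (Matrix.toEuclideanLin B v) := by
    simp [Matrix.toEuclideanLin_apply, Matrix.mulVec_mulVec]
  rw [LinearMap.coe_toContinuousLinearMap', hcomp]
  calc ‖Matrix.toEuclideanLin Q (Matrix.toEuclideanLin B v)‖
      ≤ ‖Matrix.toEuclideanLin B v‖ := aux_proj_vec_contract Q hsym hidem _
    _ = ‖LinearMap.toContinuousLinearMap (Matrix.toEuclideanLin B) v‖ := by
        rw [LinearMap.coe_toContinuousLinearMap']
    _ ≤ ‖LinearMap.toContinuousLinearMap (Matrix.toEuclideanLin B)‖ * ‖v‖ :=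
        ContinuousLinearMap.le_opNorm _ _

lemma aux_frobSq_proj_contract {m n : Type*} [Fintype m] [Fintype n] [DecidableEq m]
    (Q : Matrix m m ℝ) (hsym : Qᵀ = Q) (hidem : Q * Q = Q) (B : Matrix m n ℝ) :
    frobSq (Q * B) ≤ frobSq B := by
  have hmat : (Q * B)ᵀ * (Q * B) + ((1 - Q) * B)ᵀ * ((1 - Q) * B) = Bᵀ * B := by
    have h1 : (Q * B)ᵀ * (Q * B) = Bᵀ * (Q * B) := by
      rw [Matrix.transpose_mul, hsym, Matrix.mul_assoc, ← Matrix.mul_assoc Q Q B, hidem]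
    have hsym2 : (1 - Q)ᵀ = 1 - Q := by rw [Matrix.transpose_sub, Matrix.transpose_one, hsym]
    have hidem2 : (1 - Q) * (1 - Q) = 1 - Q := by
      rw [Matrix.mul_sub, Matrix.sub_mul, Matrix.sub_mul, Matrix.one_mul, Matrix.mul_one, hidem]
      rw [Matrix.one_mul]
      abel
    have h2 : ((1 - Q) * B)ᵀ * ((1 - Q) * B) = Bᵀ * ((1 - Q) * B) := by
      rw [Matrix.transpose_mul, hsym2, Matrix.mul_assoc, ← Matrix.mul_assoc (1 - Q) (1 - Q) B,
        hidem2]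
    rw [h1, h2, ← Matrix.mul_add, ← Matrix.add_mul]
    rw [show Q + (1 - Q) = (1 : Matrix m m ℝ) by abel, Matrix.one_mul]
  have htr : frobSq (Q * B) + frobSq ((1 - Q) * B) = frobSq B := by
    rw [aux_frobSq_eq_trace, aux_frobSq_eq_trace, aux_frobSq_eq_trace, ← Matrix.trace_add, hmat]
  have := aux_frobSq_nonneg ((1 - Q) * B)
  linarith

lemma aux_Qsym {m n : Type*} [Fintype m] [Fintype n] [DecidableEq m]
    (M : Matrix m n ℝ) (P : Matrix n m ℝ) (hMP : IsMoorePenrose M P) :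
    (1 - M * P)ᵀ = 1 - M * P := by
  rw [Matrix.transpose_sub, Matrix.transpose_one, hMP.2.2.1]

lemma aux_Qidem {m n : Type*} [Fintype m] [Fintype n] [DecidableEq m]
    (M : Matrix m n ℝ) (P : Matrix n m ℝ) (hMP : IsMoorePenrose M P) :
    (1 - M * P) * (1 - M * P) = 1 - M * P := by
  have h : M * P * (M * P) = M * P := by rw [← Matrix.mul_assoc, hMP.1]
  rw [Matrix.sub_mul, Matrix.mul_sub, Matrix.mul_sub, Matrix.one_mul, Matrix.one_mul, Matrix.mul_one, h]
  abel

lemma aux_Qfactor {m n : Type*} [Fintype m] [Fintype n] [DecidableEq m]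
    (A M : Matrix m n ℝ) (P : Matrix n m ℝ) (hMP : IsMoorePenrose M P) :
    A - M * P * A = (1 - M * P) * (A - M) := by
  rw [Matrix.sub_mul, Matrix.mul_sub, Matrix.mul_sub, Matrix.one_mul, Matrix.one_mul, hMP.1]
  abel

lemma aux_spec_moore {m n : Type*} [Fintype m] [Fintype n] [DecidableEq m] [DecidableEq n]
    (A M : Matrix m n ℝ) (P : Matrix n m ℝ) (hMP : IsMoorePenrose M P) :
    spec (A - M * P * A) ≤ spec (A - M) := by
  rw [aux_Qfactor A M P hMP]
  exact aux_spec_proj_contract _ (aux_Qsym M P hMP) (aux_Qidem M P hMP) _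

lemma aux_frobSq_moore {m n : Type*} [Fintype m] [Fintype n] [DecidableEq m]
    (A M : Matrix m n ℝ) (P : Matrix n m ℝ) (hMP : IsMoorePenrose M P) :
    frobSq (A - M * P * A) ≤ frobSq (A - M) := by
  rw [aux_Qfactor A M P hMP]
  exact aux_frobSq_proj_contract _ (aux_Qsym M P hMP) (aux_Qidem M P hMP) _

end AuxProjLemmas

/-- **`Π^ξ_{C,k}(A)` is a projection of `A`, and no other rank-`k` subspace of the column
space of `C` is better** (Lemma 5.8 of Boutsidis–Drineas–Magdon-Ismail): if `X^ξ` has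
rank at most `k` and minimizes `‖A - C Ψ‖_ξ` over all rank-at-most-`k` matrices `Ψ`,
then `‖A - C X^ξ‖_ξ² = ‖A - (C X^ξ)(C X^ξ)⁺ A‖_ξ² ≤ ‖A - (C Y)(C Y)⁺ A‖_ξ²`
for every `Y` of rank at most `k`; here for `ξ = 2` (spectral norm, minimizer `X2`) and
for `ξ = F` (Frobenius norm, minimizer `XF`). -/
theorem best_rank_k_is_projection
    {m n r : ℕ} (A : Matrix (Fin m) (Fin n) ℝ) (C : Matrix (Fin m) (Fin r) ℝ)
    (k : ℕ) (hk : k < r)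
    (X2 : Matrix (Fin r) (Fin n) ℝ) (hX2rank : X2.rank ≤ k)
    (hX2min : ∀ Ψ : Matrix (Fin r) (Fin n) ℝ, Ψ.rank ≤ k →
      spec (A - C * X2) ≤ spec (A - C * Ψ))
    (XF : Matrix (Fin r) (Fin n) ℝ) (hXFrank : XF.rank ≤ k)
    (hXFmin : ∀ Ψ : Matrix (Fin r) (Fin n) ℝ, Ψ.rank ≤ k →
      frobSq (A - C * XF) ≤ frobSq (A - C * Ψ))
    (Y : Matrix (Fin r) (Fin n) ℝ) (hYrank : Y.rank ≤ k)
    (P2 : Matrix (Fin n) (Fin m) ℝ) (hP2 : IsMoorePenrose (C * X2) P2)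
    (PF : Matrix (Fin n) (Fin m) ℝ) (hPF : IsMoorePenrose (C * XF) PF)
    (PY : Matrix (Fin n) (Fin m) ℝ) (hPY : IsMoorePenrose (C * Y) PY) :
    (spec (A - C * X2) ^ 2 = spec (A - (C * X2) * P2 * A) ^ 2 ∧
      spec (A - C * X2) ^ 2 ≤ spec (A - (C * Y) * PY * A) ^ 2) ∧
    (frobSq (A - C * XF) = frobSq (A - (C * XF) * PF * A) ∧
      frobSq (A - C * XF) ≤ frobSq (A - (C * Y) * PY * A)) := by
  have hrY : (Y * PY * A).rank ≤ k :=
    le_trans (le_trans (Matrix.rank_mul_le_left _ _) (Matrix.rank_mul_le_left _ _)) hYrank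
  have hassocY : A - (C * Y) * PY * A = A - C * (Y * PY * A) := by
    rw [Matrix.mul_assoc C Y PY, Matrix.mul_assoc C (Y * PY) A]
  constructor
  · have hr2 : (X2 * P2 * A).rank ≤ k :=
      le_trans (le_trans (Matrix.rank_mul_le_left _ _) (Matrix.rank_mul_le_left _ _)) hX2rank
    have hassoc2 : A - (C * X2) * P2 * A = A - C * (X2 * P2 * A) := by
      rw [Matrix.mul_assoc C X2 P2, Matrix.mul_assoc C (X2 * P2) A]
    have hle1 : spec (A - C * X2) ≤ spec (A - (C * X2) * P2 * A) := by
      rw [hassoc2]; exact hX2min _ hr2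
    have heq : spec (A - C * X2) = spec (A - (C * X2) * P2 * A) :=
      le_antisymm hle1 (aux_spec_moore A (C * X2) P2 hP2)
    refine ⟨by rw [heq], ?_⟩
    have hleY : spec (A - C * X2) ≤ spec (A - (C * Y) * PY * A) := by
      rw [hassocY]; exact hX2min _ hrY
    exact pow_le_pow_left₀ (aux_spec_nonneg _) hleY 2
  · have hrF : (XF * PF * A).rank ≤ k :=
      le_trans (le_trans (Matrix.rank_mul_le_left _ _) (Matrix.rank_mul_le_left _ _)) hXFrank
    have hassocF : A - (C * XF) * PF * A = A - C * (XF * PF * A) := by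
      rw [Matrix.mul_assoc C XF PF, Matrix.mul_assoc C (XF * PF) A]
    have hle1 : frobSq (A - C * XF) ≤ frobSq (A - (C * XF) * PF * A) := by
      rw [hassocF]; exact hXFmin _ hrF
    have heq : frobSq (A - C * XF) = frobSq (A - (C * XF) * PF * A) :=
      le_antisymm hle1 (aux_frobSq_moore A (C * XF) PF hPF)
    refine ⟨heq, ?_⟩
    rw [hassocY]; exact hXFmin _ hrY
end
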